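/- arXiv:1312.3410 — 8 statements merged into one kernel-verified Lean document; each statement's English description precedes it below -/
import Mathlib

section
/- Let n ≥ 2 be an integer, T ∈ (0, ∞], k ∈ ℝ and δ > 0. Let f, x : [0, T) → ℝ be differentiable functions such that f(t) ≤ k for all t ∈ [0, T), x(0) ≤ -δ, and x'(t) ≤ -x(t)² - (2/(n-1))·x(t)·f'(t) for all t ∈ [0, T). Set t₁ := (1/δ)·exp(2(k - f(0))/(n-1)). Then t < t₁ and x(t) ≤ -1/(t₁ - t) for every t ∈ [0, T); in particular T ≤ t₁. -/
lemma aux_anti {a b : ℝ} {g g' : ℝ → ℝ}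
    (hg : ∀ s ∈ Set.Icc a b, HasDerivWithinAt g (g' s) (Set.Icc a b) s)
    (h0 : ∀ s ∈ Set.Icc a b, g' s ≤ 0) : AntitoneOn g (Set.Icc a b) := by
  apply antitoneOn_of_hasDerivWithinAt_nonpos (convex_Icc a b)
    (fun s hs => (hg s hs).continuousWithinAt) (f' := g')
  · intro s hs
    rw [interior_Icc] at hs ⊢
    exact (hg s (Set.Ioo_subset_Icc_self hs)).mono Set.Ioo_subset_Icc_self
  · intro s hs
    rw [interior_Icc] at hs
    exact h0 s (Set.Ioo_subset_Icc_self hs)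

set_option maxHeartbeats 1000000 in
/-- Lemma 2.1 (Raychaudhuri focusing estimate, `Ric_f ≥ 0` case):
a solution of `x' ≤ -x² - (2/(n-1)) x f'` on `[0,T)` with `f ≤ k` and
`x(0) ≤ -δ < 0` satisfies `x(t) ≤ -1/(t₁ - t)` where
`t₁ = (1/δ)·exp(2(k - f(0))/(n-1))`; in particular `T ≤ t₁`. -/
theorem stmt_0 (n : ℕ) (hn : 2 ≤ n) (T : EReal) (hT : 0 < T) (k δ : ℝ) (hδ : 0 < δ)
    (f x f' x' : ℝ → ℝ)
    (D : Set ℝ) (hD : D = {t : ℝ | 0 ≤ t ∧ (t : EReal) < T})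
    (hf : ∀ t ∈ D, HasDerivWithinAt f (f' t) D t)
    (hx : ∀ t ∈ D, HasDerivWithinAt x (x' t) D t)
    (hfk : ∀ t ∈ D, f t ≤ k)
    (hx0 : x 0 ≤ -δ)
    (hineq : ∀ t ∈ D, x' t ≤ -(x t) ^ 2 - (2 / ((n : ℝ) - 1)) * x t * f' t)
    (t₁ : ℝ) (ht₁ : t₁ = (1 / δ) * Real.exp (2 * (k - f 0) / ((n : ℝ) - 1))) :
    (∀ t ∈ D, t < t₁ ∧ x t ≤ -1 / (t₁ - t)) ∧ T ≤ (t₁ : EReal) := by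
  set c : ℝ := 2 / ((n : ℝ) - 1) with hc_def
  have hn1 : (1 : ℝ) ≤ (n : ℝ) - 1 := by
    have : (2 : ℝ) ≤ (n : ℝ) := by exact_mod_cast hn
    linarith
  have hc : 0 < c := by positivity
  set w : ℝ → ℝ := fun s => x s * Real.exp (c * f s) with hw_def
  set W' : ℝ → ℝ := fun s => (x' s + c * x s * f' s) * Real.exp (c * f s) with hW'_def
  set E : ℝ := Real.exp (-(c * k)) with hE_def
  have hE : 0 < E := Real.exp_pos _
  set v : ℝ → ℝ := fun s => -(w s)⁻¹ with hv_def
  have ht₁' : t₁ = (1 / δ) * Real.exp (c * (k - f 0)) := by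
    rw [ht₁]; congr 1; congr 1; rw [hc_def]; ring
  have hEt₁ : E * t₁ = (1 / δ) * Real.exp (-(c * f 0)) := by
    have hexp : Real.exp (-(c * k)) * Real.exp (c * (k - f 0)) = Real.exp (-(c * f 0)) := by
      rw [← Real.exp_add]; congr 1; ring
    calc E * t₁ = (1 / δ) * (Real.exp (-(c * k)) * Real.exp (c * (k - f 0))) := by
          rw [hE_def, ht₁']; ring
      _ = (1 / δ) * Real.exp (-(c * f 0)) := by rw [hexp]
  have ht₁pos : 0 < t₁ := by rw [ht₁]; positivity
  -- the key pointwise claim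
  have key : ∀ t ∈ D, t < t₁ ∧ x t ≤ -1 / (t₁ - t) := by
    intro t htD
    obtain ⟨ht0, htT⟩ : 0 ≤ t ∧ (t : EReal) < T := by rwa [hD] at htD
    set I : Set ℝ := Set.Icc 0 t with hI_def
    have hID : I ⊆ D := by
      intro s hs
      rw [hD]
      exact ⟨hs.1, lt_of_le_of_lt (EReal.coe_le_coe_iff.mpr hs.2) htT⟩
    have h0I : (0 : ℝ) ∈ I := Set.left_mem_Icc.mpr ht0
    have htI : t ∈ I := Set.right_mem_Icc.mpr ht0
    -- derivative of w on I
    have hw : ∀ s ∈ I, HasDerivWithinAt w (W' s) I s := by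
      intro s hs
      have hxs := (hx s (hID hs)).mono hID
      have hfs := (((hf s (hID hs)).mono hID).const_mul c).exp
      have := hxs.mul hfs
      refine HasDerivWithinAt.congr_deriv this ?_
      simp only [hW'_def]
      ring
    -- w' ≤ -E w²
    have hW'le : ∀ s ∈ I, W' s ≤ -E * (w s) ^ 2 := by
      intro s hs
      have h1 : x' s + c * x s * f' s ≤ -(x s) ^ 2 := by
        have := hineq s (hID hs); linarith
      have hexp : (0 : ℝ) < Real.exp (c * f s) := Real.exp_pos _
      have h2 : W' s ≤ -(x s) ^ 2 * Real.exp (c * f s) := by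
        have := mul_le_mul_of_nonneg_right h1 hexp.le
        simpa [hW'_def] using this
      have h3 : -(x s) ^ 2 * Real.exp (c * f s) = -(w s) ^ 2 * Real.exp (-(c * f s)) := by
        simp only [hw_def]
        rw [Real.exp_neg]
        have h := (Real.exp_pos (c * f s)).ne'
        field_simp
      have h4 : E ≤ Real.exp (-(c * f s)) := by
        rw [hE_def]
        apply Real.exp_le_exp.mpr
        have := mul_le_mul_of_nonneg_left (hfk s (hID hs)) hc.le
        linarith
      nlinarith [sq_nonneg (w s)]
    have hW'0 : ∀ s ∈ I, W' s ≤ 0 := by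
      intro s hs
      have := hW'le s hs
      nlinarith [sq_nonneg (w s)]
    -- w antitone, w < 0
    have hanti : AntitoneOn w I := aux_anti hw hW'0
    have hw0 : w 0 ≤ -(δ * Real.exp (c * f 0)) := by
      simp only [hw_def]
      have h : (0 : ℝ) < Real.exp (c * f 0) := Real.exp_pos _
      nlinarith
    have hw0neg : w 0 < 0 :=
      lt_of_le_of_lt hw0 (by nlinarith [Real.exp_pos (c * f 0)])
    have hwneg : ∀ s ∈ I, w s < 0 := fun s hs =>
      lt_of_le_of_lt (hanti h0I hs hs.1) hw0neg
    -- derivative of v + E·s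
    have hv : ∀ s ∈ I, HasDerivWithinAt (fun s => v s + E * s) (W' s / (w s) ^ 2 + E) I s := by
      intro s hs
      have h1 := ((hw s hs).inv (hwneg s hs).ne).neg
      have h2 := h1.add ((hasDerivWithinAt_id s I).const_mul E)
      refine HasDerivWithinAt.congr_deriv h2 ?_
      ring
    have hv'le : ∀ s ∈ I, W' s / (w s) ^ 2 + E ≤ 0 := by
      intro s hs
      have hw2 : (0 : ℝ) < (w s) ^ 2 :=
        lt_of_le_of_ne (sq_nonneg _) (Ne.symm (pow_ne_zero 2 (hwneg s hs).ne))
      have h1 : W' s / (w s) ^ 2 ≤ -E := by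
        rw [div_le_iff₀ hw2]
        have := hW'le s hs
        linarith
      linarith
    have hganti : AntitoneOn (fun s => v s + E * s) I := aux_anti hv hv'le
    have hg := hganti h0I htI ht0
    simp only [mul_zero, add_zero] at hg
    -- bound on v 0
    have ha : (0 : ℝ) < δ * Real.exp (c * f 0) := by positivity
    have hv0 : v 0 ≤ E * t₁ := by
      have h1 : δ * Real.exp (c * f 0) ≤ -w 0 := by linarith
      have h2 : (-w 0)⁻¹ ≤ (δ * Real.exp (c * f 0))⁻¹ :=
        inv_anti₀ ha h1
      have h3 : v 0 = (-w 0)⁻¹ := by rw [hv_def]; simp [inv_neg]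
      have h4 : (δ * Real.exp (c * f 0))⁻¹ = E * t₁ := by
        rw [hEt₁, mul_inv, ← Real.exp_neg]
        ring
      calc v 0 = (-w 0)⁻¹ := h3
        _ ≤ (δ * Real.exp (c * f 0))⁻¹ := h2
        _ = E * t₁ := h4
    have hvtpos : 0 < v t := by
      simp only [hv_def]
      have := inv_lt_zero.mpr (hwneg t htI)
      linarith
    have hvtle : v t ≤ E * (t₁ - t) := by nlinarith
    have htlt : t < t₁ := by nlinarith
    refine ⟨htlt, ?_⟩
    -- conclude the bound on x t
    have hp : 0 < t₁ - t := by linarith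
    have hwv : w t * v t = -1 := by
      simp only [hv_def]
      rw [mul_neg, mul_inv_cancel₀ (hwneg t htI).ne]
    have hA : w t * (E * (t₁ - t)) ≤ -1 := by
      have h5 := mul_le_mul_of_nonpos_left hvtle (hwneg t htI).le
      rw [hwv] at h5
      exact h5
    have hxt : x t = w t * Real.exp (-(c * f t)) := by
      simp only [hw_def]
      rw [Real.exp_neg]
      field_simp
    have hB : E ≤ Real.exp (-(c * f t)) := by
      rw [hE_def]
      apply Real.exp_le_exp.mpr
      have := mul_le_mul_of_nonneg_left (hfk t htD) hc.le
      linarith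
    rw [le_div_iff₀ hp, hxt]
    have hC : (Real.exp (-(c * f t)) - E) * (w t * (t₁ - t)) ≤ 0 :=
      mul_nonpos_of_nonneg_of_nonpos (sub_nonneg.2 hB)
        (by nlinarith [hwneg t htI])
    nlinarith
  refine ⟨key, ?_⟩
  by_contra h
  push_neg at h
  have ht₁D : t₁ ∈ D := by rw [hD]; exact ⟨ht₁pos.le, h⟩
  exact absurd (key t₁ ht₁D).1 (lt_irrefl t₁)
end

section
/- Let n ≥ 2 be an integer, T ∈ (0, ∞], k ∈ ℝ and δ > 0. Let f, x : [0, T) → ℝ be differentiable functions such that f(t) ≤ k for all t ∈ [0, T), x(0) ≤ -δ, and x'(t) ≤ -x(t)² - (2/(n-1))·x(t)·f'(t) for all t ∈ [0, T). Then x(t) < 0 for all t ∈ [0, T); i.e., x never acquires a zero on its interval of definition. -/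
/-- Intermediate claim in the proof of Lemma 2.1 (`T₀ = T`):
a solution of `x' ≤ -x² - (2/(n-1)) x f'` on `[0,T)` with `f ≤ k` and
`x(0) ≤ -δ < 0` remains strictly negative on `[0,T)`. -/
theorem stmt_1 (n : ℕ) (hn : 2 ≤ n) (T : EReal) (hT : 0 < T) (k δ : ℝ) (hδ : 0 < δ)
    (f x f' x' : ℝ → ℝ)
    (D : Set ℝ) (hD : D = {t : ℝ | 0 ≤ t ∧ (t : EReal) < T})
    (hf : ∀ t ∈ D, HasDerivWithinAt f (f' t) D t)
    (hx : ∀ t ∈ D, HasDerivWithinAt x (x' t) D t)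
    (hfk : ∀ t ∈ D, f t ≤ k)
    (hx0 : x 0 ≤ -δ)
    (hineq : ∀ t ∈ D, x' t ≤ -(x t) ^ 2 - (2 / ((n : ℝ) - 1)) * x t * f' t) :
    ∀ t ∈ D, x t < 0 := by
  set c : ℝ := 2 / ((n : ℝ) - 1) with hc
  have h0D : (0 : ℝ) ∈ D := by
    rw [hD]; exact ⟨le_refl _, by simpa using hT⟩
  have hconv : Convex ℝ D := by
    rw [convex_iff_ordConnected]
    constructor
    intro a ha b hb z hz
    rw [hD] at ha hb ⊢
    refine ⟨le_trans ha.1 hz.1, lt_of_le_of_lt ?_ hb.2⟩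
    exact_mod_cast EReal.coe_le_coe_iff.mpr hz.2
  set g : ℝ → ℝ := fun t => x t * Real.exp (c * f t) with hg
  set g' : ℝ → ℝ := fun t =>
    x' t * Real.exp (c * f t) + x t * (Real.exp (c * f t) * (c * f' t)) with hg'
  have hgd : ∀ t ∈ D, HasDerivWithinAt g (g' t) D t := fun t ht =>
    (hx t ht).mul (((hf t ht).const_mul c).exp)
  have hcont : ContinuousOn g D := fun t ht => (hgd t ht).continuousWithinAt
  have hder : ∀ t ∈ interior D, HasDerivAt g (g' t) t := by
    intro t ht
    exact (hgd t (interior_subset ht)).hasDerivAt (mem_interior_iff_mem_nhds.mp ht)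
  have hanti : AntitoneOn g D := by
    apply antitoneOn_of_deriv_nonpos hconv hcont
    · exact fun t ht => (hder t ht).differentiableAt.differentiableWithinAt
    · intro t ht
      rw [(hder t ht).deriv]
      have h1 := hineq t (interior_subset ht)
      have h2 : (0 : ℝ) < Real.exp (c * f t) := Real.exp_pos _
      have h3 : x' t + c * x t * f' t ≤ -(x t) ^ 2 := by linarith
      have h4 : g' t = (x' t + c * x t * f' t) * Real.exp (c * f t) := by
        rw [hg']; ring
      rw [h4]
      have : x' t + c * x t * f' t ≤ 0 := le_trans h3 (by nlinarith [sq_nonneg (x t)])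
      exact mul_nonpos_of_nonpos_of_nonneg this h2.le
  intro t ht
  have ht0 : 0 ≤ t := by rw [hD] at ht; exact ht.1
  have := hanti h0D ht ht0
  have h5 : x 0 * Real.exp (c * f 0) < 0 :=
    mul_neg_of_neg_of_pos (by linarith) (Real.exp_pos _)
  have h6 : x t * Real.exp (c * f t) < 0 := lt_of_le_of_lt this h5
  have h7 := Real.exp_pos (c * f t)
  nlinarith
end

section
/- Let n ≥ 2 be an integer, T ∈ (0, ∞], k ∈ ℝ and δ > 0. Let f, x : [0, T) → ℝ be differentiable functions such that f(t) ≤ k for all t ∈ [0, T), x(0) ≤ -δ, and x'(t) ≤ -x(t)² - (2/(n-1))·x(t)·f'(t) for all t ∈ [0, T). Then for every t ∈ [0, T), t < (1/δ)·exp(2(k - f(0))/(n-1)) and x(t) ≤ -exp(2(k - f(t))/(n-1)) / ((1/δ)·exp(2(k - f(0))/(n-1)) - t). -/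
/-- Sharpened estimate (2.11)–(2.12) from the proof of Lemma 2.1:
the quantitative decay bound keeping the `f`-dependent exponential factor. -/
theorem stmt_2 (n : ℕ) (hn : 2 ≤ n) (T : EReal) (hT : 0 < T) (k δ : ℝ) (hδ : 0 < δ)
    (f x f' x' : ℝ → ℝ)
    (D : Set ℝ) (hD : D = {t : ℝ | 0 ≤ t ∧ (t : EReal) < T})
    (hf : ∀ t ∈ D, HasDerivWithinAt f (f' t) D t)
    (hx : ∀ t ∈ D, HasDerivWithinAt x (x' t) D t)
    (hfk : ∀ t ∈ D, f t ≤ k)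
    (hx0 : x 0 ≤ -δ)
    (hineq : ∀ t ∈ D, x' t ≤ -(x t) ^ 2 - (2 / ((n : ℝ) - 1)) * x t * f' t) :
    ∀ t ∈ D, t < (1 / δ) * Real.exp (2 * (k - f 0) / ((n : ℝ) - 1)) ∧
      x t ≤ -Real.exp (2 * (k - f t) / ((n : ℝ) - 1)) /
        ((1 / δ) * Real.exp (2 * (k - f 0) / ((n : ℝ) - 1)) - t) := by
  have hn1 : (1:ℝ) ≤ (n:ℝ) - 1 := by
    have : (2:ℝ) ≤ (n:ℝ) := by exact_mod_cast hn
    linarith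
  set c : ℝ := 2 / ((n:ℝ) - 1) with hcdef
  have hcpos : 0 < c := div_pos two_pos (by linarith)
  have hDconv : Convex ℝ D := by
    rw [hD, convex_iff_ordConnected]
    constructor
    intro u hu v hv z hz
    exact ⟨le_trans hu.1 hz.1, lt_of_le_of_lt (by exact_mod_cast hz.2) hv.2⟩
  have h0D : (0:ℝ) ∈ D := by
    rw [hD]; exact ⟨le_refl 0, by exact_mod_cast hT⟩
  set a : ℝ := Real.exp (-(c * k)) with hadef
  have hapos : 0 < a := Real.exp_pos _
  set y : ℝ → ℝ := fun t => x t * Real.exp (c * f t) with hydef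
  set y' : ℝ → ℝ := fun t => (x' t + c * x t * f' t) * Real.exp (c * f t) with hy'def
  have hy : ∀ t ∈ D, HasDerivWithinAt y (y' t) D t := by
    intro t ht
    have h1 := ((hf t ht).const_mul c).exp
    have h2 := (hx t ht).mul h1
    refine h2.congr_deriv ?_
    simp only [hy'def]; ring
  have hyle : ∀ t ∈ D, y' t ≤ -(a * (y t)^2) := by
    intro t ht
    have h1 : x' t + c * x t * f' t ≤ -(x t)^2 := by
      have := hineq t ht; linarith
    have hexp : (0:ℝ) < Real.exp (c * f t) := Real.exp_pos _
    have h2 : y' t ≤ -(x t)^2 * Real.exp (c * f t) := by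
      simp only [hy'def]
      exact mul_le_mul_of_nonneg_right h1 hexp.le
    have hE1 : Real.exp (c * f t - c * k) ≤ 1 := by
      rw [Real.exp_le_one_iff]
      nlinarith [hfk t ht]
    have eE : Real.exp (-(c*k)) * (Real.exp (c * f t))^2
        = Real.exp (c*f t) * Real.exp (c * f t - c * k) := by
      rw [sq, ← Real.exp_add, ← Real.exp_add, ← Real.exp_add]
      ring_nf
    have e1 : a * (y t)^2 = (x t)^2 * Real.exp (c * f t) * Real.exp (c * f t - c * k) := by
      simp only [hydef, hadef, mul_pow]
      linear_combination (x t)^2 * eE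
    have h3 : a * (y t)^2 ≤ (x t)^2 * Real.exp (c * f t) := by
      rw [e1]
      have hnn : (0:ℝ) ≤ (x t)^2 * Real.exp (c * f t) := by positivity
      nlinarith [Real.exp_pos (c * f t - c * k)]
    linarith
  have hyanti : AntitoneOn y D := by
    apply antitoneOn_of_hasDerivWithinAt_nonpos hDconv
      (fun t ht => (hy t ht).continuousWithinAt)
      (fun t ht => (hy t (interior_subset ht)).mono interior_subset)
    intro t ht
    have h1 := hyle t (interior_subset ht)
    nlinarith [sq_nonneg (y t)]
  set P : ℝ := δ * Real.exp (c * f 0) with hPdef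
  have hPpos : 0 < P := by positivity
  have hy0 : y 0 ≤ -P := by
    have hE := Real.exp_pos (c * f 0)
    simp only [hydef, hPdef]
    nlinarith
  have hyneg : ∀ t ∈ D, y t ≤ -P := by
    intro t ht
    have h0t : (0:ℝ) ≤ t := by rw [hD] at ht; exact ht.1
    exact le_trans (hyanti h0D ht h0t) hy0
  -- the function g = -(y)⁻¹ + a * id is antitone on D
  set g : ℝ → ℝ := fun t => -(y t)⁻¹ + a * t with hgdef
  set g' : ℝ → ℝ := fun t => y' t / (y t)^2 + a with hg'def
  have hg : ∀ t ∈ D, HasDerivWithinAt g (g' t) D t := by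
    intro t ht
    have hyne : y t ≠ 0 := by
      have := hyneg t ht; intro h; rw [h] at this; linarith
    have h1 := ((hy t ht).inv hyne).neg
    have h2 : HasDerivWithinAt (fun s : ℝ => a * s) a D t := by
      simpa using ((hasDerivAt_id t).const_mul a).hasDerivWithinAt
    have h3 := h1.add h2
    refine h3.congr_deriv ?_
    simp only [hg'def]; ring
  have hganti : AntitoneOn g D := by
    apply antitoneOn_of_hasDerivWithinAt_nonpos hDconv
      (fun t ht => (hg t ht).continuousWithinAt)
      (fun t ht => (hg t (interior_subset ht)).mono interior_subset)
    intro t ht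
    have htD := interior_subset ht
    have h1 := hyle t htD
    have hy2 : (0:ℝ) < (y t)^2 := by
      have := hyneg t htD
      nlinarith
    simp only [hg'def]
    have h4 : y' t / (y t)^2 ≤ (-(a * (y t)^2)) / (y t)^2 :=
      div_le_div_of_nonneg_right h1 hy2.le
    have h5 : (-(a * (y t)^2)) / (y t)^2 = -a := by
      rw [neg_div, mul_div_assoc, div_self hy2.ne', mul_one]
    rw [h5] at h4
    linarith
  clear_value c a y y' P g g'
  -- main estimates
  intro t ht
  have h0t : (0:ℝ) ≤ t := by rw [hD] at ht; exact ht.1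
  have hyt : y t ≤ -P := hyneg t ht
  have hytne : y t ≠ 0 := by intro h; rw [h] at hyt; linarith
  have hytneg : y t < 0 := lt_of_le_of_lt hyt (by linarith)
  have hzt : 0 < -(y t)⁻¹ := by
    rw [neg_pos]
    exact inv_lt_zero.mpr hytneg
  have hgle : g t ≤ g 0 := hganti h0D ht h0t
  have hz0 : -(y 0)⁻¹ ≤ P⁻¹ := by
    have hy0' : P ≤ -(y 0) := by linarith [hy0]
    have := one_div_le_one_div_of_le hPpos hy0'
    simpa [one_div, inv_neg] using this
  have hzle : -(y t)⁻¹ ≤ P⁻¹ - a * t := by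
    have : -(y t)⁻¹ + a * t ≤ -(y 0)⁻¹ := by simpa [hgdef] using hgle
    linarith
  have hden : 0 < P⁻¹ - a * t := lt_of_lt_of_le hzt hzle
  -- time bound
  have hexpk := Real.exp_pos (c * k)
  have E1 : (1 / δ) * Real.exp (2 * (k - f 0) / ((n:ℝ)-1)) = P⁻¹ / a := by
    have h2 : 2 * (k - f 0) / ((n:ℝ)-1) = c * k - c * f 0 := by
      rw [hcdef]; field_simp
    rw [h2, hPdef, hadef, Real.exp_sub, Real.exp_neg, mul_inv]
    field_simp [Real.exp_ne_zero]
  constructor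
  · rw [E1]
    rw [lt_div_iff₀ hapos]
    linarith
  · -- decay bound
    have hyineq : y t ≤ -(P⁻¹ - a * t)⁻¹ := by
      have h1 : (P⁻¹ - a * t)⁻¹ ≤ (-(y t)⁻¹)⁻¹ := by
        have := one_div_le_one_div_of_le hzt hzle
        simpa [one_div] using this
      have h2 : (-(y t)⁻¹)⁻¹ = -(y t) := by
        rw [inv_neg, inv_inv]
      rw [h2] at h1
      linarith
    have h2t : 2 * (k - f t) / ((n:ℝ)-1) = c * k - c * f t := by
      rw [hcdef]; field_simp
    have hexpft : (0:ℝ) < Real.exp (c * f t) := Real.exp_pos _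
    have hxy : x t = y t / Real.exp (c * f t) := by
      simp only [hydef]; field_simp
    have hQa : P⁻¹ / a - t = (P⁻¹ - a * t) / a := by field_simp
    rw [h2t, E1, hxy, hQa]
    have RHSeq : -Real.exp (c*k - c*f t) / ((P⁻¹ - a*t)/a)
        = -(P⁻¹ - a*t)⁻¹ / Real.exp (c*f t) := by
      rw [div_eq_div_iff (by positivity) hexpft.ne']
      have l1 : Real.exp (c*k - c*f t) * Real.exp (c*f t) = Real.exp (c*k) := by
        rw [← Real.exp_add]; ring_nf
      have l2 : (P⁻¹ - a*t)⁻¹ * ((P⁻¹ - a*t)/a) = a⁻¹ := by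
        rw [← mul_div_assoc, inv_mul_cancel₀ hden.ne', one_div]
      have l3 : a⁻¹ = Real.exp (c*k) := by
        rw [hadef, Real.exp_neg, inv_inv]
      rw [neg_mul, neg_mul, l1, l2, l3]
    rw [RHSeq]
    exact div_le_div_of_nonneg_right hyineq hexpft.le
end

section
/- Let n ≥ 2 be an integer, T ∈ (0, ∞] and k ∈ ℝ. Let f, x : [0, T) → ℝ be continuously differentiable with f(s) ≤ k for all s, and suppose x'(s) ≤ -x(s)² - (2/(n-1))·x(s)·f'(s) for all s ∈ [0, T). Let t ∈ [0, T) and assume x(s) < 0 for all s ∈ [0, t]. Then exp(-2f(t)/(n-1))/x(t) - exp(-2f(0)/(n-1))/x(0) ≥ ∫₀ᵗ exp(-2f(s)/(n-1)) ds ≥ t·exp(-2k/(n-1)). -/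
/-- Integral inequality (2.10) from the proof of Lemma 2.1: on an interval where
`x < 0`, integrating `(exp(-2f/(n-1))/x)' ≥ exp(-2f/(n-1))` gives the stated bound. -/
theorem stmt_3 (n : ℕ) (hn : 2 ≤ n) (T : EReal) (hT : 0 < T) (k : ℝ)
    (f x f' x' : ℝ → ℝ)
    (D : Set ℝ) (hD : D = {s : ℝ | 0 ≤ s ∧ (s : EReal) < T})
    (hf : ∀ s ∈ D, HasDerivWithinAt f (f' s) D s)
    (hf' : ContinuousOn f' D)
    (hx : ∀ s ∈ D, HasDerivWithinAt x (x' s) D s)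
    (hx' : ContinuousOn x' D)
    (hfk : ∀ s ∈ D, f s ≤ k)
    (hineq : ∀ s ∈ D, x' s ≤ -(x s) ^ 2 - (2 / ((n : ℝ) - 1)) * x s * f' s)
    (t : ℝ) (ht : t ∈ D)
    (hneg : ∀ s ∈ Set.Icc (0 : ℝ) t, x s < 0) :
    (∫ s in (0 : ℝ)..t, Real.exp (-2 * f s / ((n : ℝ) - 1))) ≤
        Real.exp (-2 * f t / ((n : ℝ) - 1)) / x t -
          Real.exp (-2 * f 0 / ((n : ℝ) - 1)) / x 0 ∧
      t * Real.exp (-2 * k / ((n : ℝ) - 1)) ≤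
        ∫ s in (0 : ℝ)..t, Real.exp (-2 * f s / ((n : ℝ) - 1)) := by
  have hn2 : (2:ℝ) ≤ (n:ℝ) := by exact_mod_cast hn
  have hn1 : (1:ℝ) ≤ (n:ℝ) - 1 := by linarith
  set c : ℝ := -2 / ((n : ℝ) - 1) with hc
  have hcf : ∀ s : ℝ, -2 * f s / ((n : ℝ) - 1) = c * f s := by
    intro s; rw [hc]; ring
  have ht0 : 0 ≤ t := (hD ▸ ht).1
  have htT : (t : EReal) < T := (hD ▸ ht).2
  have hsub : Set.Icc (0:ℝ) t ⊆ D := by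
    intro s hs
    rw [hD]
    exact ⟨hs.1, lt_of_le_of_lt (by exact_mod_cast hs.2) htT⟩
  have hxne : ∀ s ∈ Set.Icc (0:ℝ) t, x s ≠ 0 := fun s hs => ne_of_lt (hneg s hs)
  set G : ℝ → ℝ := fun s => Real.exp (c * f s) / x s with hG
  set G' : ℝ → ℝ := fun s =>
    (Real.exp (c * f s) * (c * f' s) * x s - Real.exp (c * f s) * x' s) / x s ^ 2 with hG'
  -- derivative of G
  have hderiv : ∀ s ∈ Set.Icc (0:ℝ) t, HasDerivWithinAt G (G' s) (Set.Icc (0:ℝ) t) s := by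
    intro s hs
    exact ((((hf s (hsub hs)).const_mul c).exp).div (hx s (hsub hs)) (hxne s hs)).mono hsub
  -- continuity on Icc
  have hfc : ContinuousOn f (Set.Icc (0:ℝ) t) :=
    fun s hs => ((hf s (hsub hs)).continuousWithinAt).mono hsub
  have hxc : ContinuousOn x (Set.Icc (0:ℝ) t) :=
    fun s hs => ((hx s (hsub hs)).continuousWithinAt).mono hsub
  have hEc : ContinuousOn (fun s => Real.exp (c * f s)) (Set.Icc (0:ℝ) t) :=
    Real.continuous_exp.comp_continuousOn (continuousOn_const.mul hfc)
  have hGc : ContinuousOn G (Set.Icc (0:ℝ) t) := hEc.div hxc hxne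
  have hG'c : ContinuousOn G' (Set.Icc (0:ℝ) t) := by
    apply ContinuousOn.div
    · exact ((hEc.mul (continuousOn_const.mul (hf'.mono hsub))).mul hxc).sub
        (hEc.mul (hx'.mono hsub))
    · exact hxc.pow 2
    · exact fun s hs => pow_ne_zero 2 (hxne s hs)
  have hG'int : IntervalIntegrable G' MeasureTheory.volume 0 t := by
    apply ContinuousOn.intervalIntegrable
    rwa [Set.uIcc_of_le ht0]
  have hEint : IntervalIntegrable (fun s => Real.exp (-2 * f s / ((n:ℝ)-1)))
      MeasureTheory.volume 0 t := by
    apply ContinuousOn.intervalIntegrable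
    rw [Set.uIcc_of_le ht0]
    simpa only [hcf] using hEc
  -- FTC
  have hFTC : ∫ s in (0:ℝ)..t, G' s = G t - G 0 := by
    apply intervalIntegral.integral_eq_sub_of_hasDeriv_right_of_le ht0 hGc _ hG'int
    intro s hs
    have hmem : D ∈ nhds s :=
      mem_nhds_iff.2 ⟨Set.Ioo 0 t, Set.Subset.trans Set.Ioo_subset_Icc_self hsub,
        isOpen_Ioo, hs⟩
    have hsI : s ∈ Set.Icc (0:ℝ) t := Set.Ioo_subset_Icc_self hs
    have : HasDerivAt G (G' s) s :=
      (((((hf s (hsub hsI)).const_mul c).exp).div (hx s (hsub hsI))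
        (hxne s hsI))).hasDerivAt hmem
    exact this.hasDerivWithinAt
  -- pointwise: exp(c f s) ≤ G' s on Icc
  have hpt : ∀ s ∈ Set.Icc (0:ℝ) t, Real.exp (-2 * f s / ((n:ℝ)-1)) ≤ G' s := by
    intro s hs
    rw [hcf]
    have hxs : x s < 0 := hneg s hs
    have hx2 : (0:ℝ) < x s ^ 2 := by nlinarith
    have hi := hineq s (hsub hs)
    have h2c : (2:ℝ) / ((n:ℝ) - 1) = -c := by rw [hc]; ring
    rw [h2c] at hi
    have hepos : 0 < Real.exp (c * f s) := Real.exp_pos _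
    rw [hG', le_div_iff₀ hx2]
    nlinarith [mul_le_mul_of_nonneg_left hi hepos.le]
  have h1 : (∫ s in (0:ℝ)..t, Real.exp (-2 * f s / ((n:ℝ)-1))) ≤ ∫ s in (0:ℝ)..t, G' s :=
    intervalIntegral.integral_mono_on ht0 hEint hG'int hpt
  have hpt2 : ∀ s ∈ Set.Icc (0:ℝ) t,
      Real.exp (-2 * k / ((n:ℝ)-1)) ≤ Real.exp (-2 * f s / ((n:ℝ)-1)) := by
    intro s hs
    apply Real.exp_le_exp.2
    have hfs := hfk s (hsub hs)
    have : -2 * k ≤ -2 * f s := by linarith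
    have hpos : (0:ℝ) < (n:ℝ) - 1 := by linarith
    exact div_le_div_of_nonneg_right this hpos.le
  have h2 : t * Real.exp (-2 * k / ((n:ℝ)-1)) ≤
      ∫ s in (0:ℝ)..t, Real.exp (-2 * f s / ((n:ℝ)-1)) := by
    have := intervalIntegral.integral_mono_on ht0 intervalIntegrable_const hEint hpt2
    simpa [intervalIntegral.integral_const, smul_eq_mul] using this
  refine ⟨?_, h2⟩
  calc (∫ s in (0:ℝ)..t, Real.exp (-2 * f s / ((n:ℝ)-1))) ≤ ∫ s in (0:ℝ)..t, G' s := h1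
    _ = G t - G 0 := hFTC
    _ = Real.exp (-2 * f t / ((n:ℝ)-1)) / x t - Real.exp (-2 * f 0 / ((n:ℝ)-1)) / x 0 := by
        rw [hG]; simp only [hcf]
end

section
/- Let n ≥ 2 be an integer, T ∈ (0, ∞], k ∈ ℝ and δ > 0. Let f, x : [0, T) → ℝ be differentiable functions such that f(t) ≤ k for all t ∈ [0, T), x'(t) ≤ 1 - x(t)² - (2/(n-1))·x(t)·f'(t) for all t ∈ [0, T), and x(0) ≤ -(1+δ)·exp(2(k - f(0))/(n-1)). Set t₁ := arctanh(1/(1+δ)). Then for every t ∈ [0, T), t < t₁ and x(t) ≤ -exp(2(k - f(t))/(n-1))·coth(t₁ - t); in particular T ≤ t₁. -/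
set_option maxHeartbeats 1000000


/-- Hyperbolic cotangent. -/
noncomputable def coth (t : ℝ) : ℝ := Real.cosh t / Real.sinh t

/-- Inverse hyperbolic tangent. -/
noncomputable def arctanh (y : ℝ) : ℝ := Real.log ((1 + y) / (1 - y)) / 2

open Set Filter Topology in
/-- Auxiliary monotonicity lemma: if `g' ≤ 1 - g²` and `g < 1` on `[0, τ]`,
then `t ↦ (g t + 1)/(g t - 1) · e^{-2t}` is monotone on `[0, τ]`. -/
lemma monoU_aux (D : Set ℝ) (g g' : ℝ → ℝ) (τ : ℝ)
    (hnhds : ∀ t ∈ Ioo 0 τ, D ∈ nhds t)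
    (hg : ∀ t ∈ Icc 0 τ, HasDerivWithinAt g (g' t) D t)
    (hsub : Icc 0 τ ⊆ D)
    (hne : ∀ t ∈ Icc 0 τ, g t < 1)
    (hineq : ∀ t ∈ Icc 0 τ, g' t ≤ 1 - g t ^ 2) :
    MonotoneOn (fun t => (g t + 1) / (g t - 1) * Real.exp (-2 * t)) (Icc 0 τ) := by
  have hgc : ContinuousOn g (Icc 0 τ) := fun t ht =>
    ((hg t ht).continuousWithinAt).mono hsub
  have hcont : ContinuousOn (fun t => (g t + 1) / (g t - 1) * Real.exp (-2 * t)) (Icc 0 τ) := by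
    apply ContinuousOn.mul
    · exact (hgc.add continuousOn_const).div (hgc.sub continuousOn_const)
        (fun t ht => sub_ne_zero.2 (ne_of_lt (hne t ht)))
    · exact (Real.continuous_exp.comp (continuous_const.mul continuous_id)).continuousOn
  have hderiv : ∀ t ∈ interior (Icc (0:ℝ) τ),
      HasDerivAt (fun t => (g t + 1) / (g t - 1) * Real.exp (-2 * t))
        ((g' t * (g t - 1) - (g t + 1) * g' t) / (g t - 1) ^ 2 * Real.exp (-2 * t)
          + (g t + 1) / (g t - 1) * (Real.exp (-2 * t) * (-2))) t := by
    intro t ht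
    rw [interior_Icc] at ht
    have htIcc : t ∈ Icc 0 τ := Ioo_subset_Icc_self ht
    have hgA : HasDerivAt g (g' t) t := (hg t htIcc).hasDerivAt (hnhds t ht)
    have h1 : HasDerivAt (fun t => (g t + 1) / (g t - 1))
        ((g' t * (g t - 1) - (g t + 1) * g' t) / (g t - 1) ^ 2) t :=
      (hgA.add_const 1).div (hgA.sub_const 1) (sub_ne_zero.2 (ne_of_lt (hne t htIcc)))
    have h2 : HasDerivAt (fun t : ℝ => Real.exp (-2 * t)) (Real.exp (-2 * t) * (-2)) t := by
      have := ((hasDerivAt_id t).const_mul (-2 : ℝ)).exp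
      simpa [mul_comm] using this
    exact h1.mul h2
  have hdiff : DifferentiableOn ℝ (fun t => (g t + 1) / (g t - 1) * Real.exp (-2 * t))
      (interior (Icc (0:ℝ) τ)) :=
    fun t ht => (hderiv t ht).differentiableAt.differentiableWithinAt
  refine monotoneOn_of_deriv_nonneg (convex_Icc 0 τ) hcont hdiff ?_
  · intro t ht
    rw [(hderiv t ht).deriv]
    have htIcc : t ∈ Icc 0 τ := interior_subset ht
    have hG1 : g t - 1 < 0 := sub_neg.2 (hne t htIcc)
    have hG0 : g t - 1 ≠ 0 := ne_of_lt hG1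
    have hkey : (g' t * (g t - 1) - (g t + 1) * g' t) / (g t - 1) ^ 2 * Real.exp (-2 * t)
          + (g t + 1) / (g t - 1) * (Real.exp (-2 * t) * (-2))
        = 2 * ((1 - g t ^ 2) - g' t) * Real.exp (-2 * t) / (g t - 1) ^ 2 := by
      field_simp
      ring
    rw [hkey]
    have h3 : 0 ≤ (1 - g t ^ 2) - g' t := by linarith [hineq t htIcc]
    positivity

open Set Filter Topology in
/-- Lemma 2.2 (Raychaudhuri focusing estimate, `Ric_f ≥ -(n-1)` case):
a solution of `x' ≤ 1 - x² - (2/(n-1)) x f'` on `[0,T)` with `f ≤ k` and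
`x(0) ≤ -(1+δ)·exp(2(k-f(0))/(n-1))` satisfies
`x(t) ≤ -exp(2(k-f(t))/(n-1))·coth(t₁-t)`, `t₁ = arctanh(1/(1+δ))`;
in particular `T ≤ t₁`. -/
theorem stmt_5 (n : ℕ) (hn : 2 ≤ n) (T : EReal) (hT : 0 < T) (k δ : ℝ) (hδ : 0 < δ)
    (f x f' x' : ℝ → ℝ)
    (D : Set ℝ) (hD : D = {t : ℝ | 0 ≤ t ∧ (t : EReal) < T})
    (hf : ∀ t ∈ D, HasDerivWithinAt f (f' t) D t)
    (hx : ∀ t ∈ D, HasDerivWithinAt x (x' t) D t)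
    (hfk : ∀ t ∈ D, f t ≤ k)
    (hineq : ∀ t ∈ D, x' t ≤ 1 - (x t) ^ 2 - (2 / ((n : ℝ) - 1)) * x t * f' t)
    (hx0 : x 0 ≤ -(1 + δ) * Real.exp (2 * (k - f 0) / ((n : ℝ) - 1)))
    (t₁ : ℝ) (ht₁ : t₁ = arctanh (1 / (1 + δ))) :
    (∀ t ∈ D, t < t₁ ∧
        x t ≤ -Real.exp (2 * (k - f t) / ((n : ℝ) - 1)) * coth (t₁ - t)) ∧
      T ≤ (t₁ : EReal) := by
  have hn2 : (2:ℝ) ≤ (n:ℝ) := by exact_mod_cast hn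
  set m : ℝ := (n:ℝ) - 1 with hm
  have hm1 : (1:ℝ) ≤ m := by simp only [hm]; linarith
  have hm0 : (0:ℝ) < m := by linarith
  have hδ2 : (0:ℝ) < 2 + δ := by linarith
  set c : ℝ := δ / (2 + δ) with hc
  have hc0 : 0 < c := div_pos hδ hδ2
  have hc1 : c < 1 := by rw [hc, div_lt_one hδ2]; linarith
  -- facts about t₁
  have h1δ : (0:ℝ) < 1 + δ := by linarith
  have ht₁log : t₁ = Real.log ((2 + δ) / δ) / 2 := by
    have e1 : 1 + 1 / (1 + δ) = (2 + δ) / (1 + δ) := by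
      field_simp
      ring
    have e2 : 1 - 1 / (1 + δ) = δ / (1 + δ) := by
      field_simp
      ring
    rw [ht₁, arctanh, e1, e2, div_div_div_comm, div_self (ne_of_gt h1δ), div_one]
  have ht₁exp : Real.exp (-(2 * t₁)) = c := by
    rw [ht₁log, show -(2 * (Real.log ((2+δ)/δ) / 2)) = -Real.log ((2+δ)/δ) by ring,
      Real.exp_neg, Real.exp_log (by positivity), hc, inv_div]
  have ht₁pos : 0 < t₁ := by
    rw [ht₁log]
    have h1 : 1 < (2 + δ) / δ := by rw [lt_div_iff₀ hδ]; linarith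
    have := Real.log_pos h1
    linarith
  -- membership facts
  have hIccD : ∀ b ∈ D, Icc 0 b ⊆ D := by
    intro b hb t ht
    rw [hD] at hb ⊢
    exact ⟨ht.1, lt_of_le_of_lt (EReal.coe_le_coe_iff.2 ht.2) hb.2⟩
  -- the renormalized function g
  set g : ℝ → ℝ := fun t => x t * Real.exp (2 * (f t - k) / m) with hgdef
  set g' : ℝ → ℝ := fun t => (x' t + x t * (2 * f' t / m)) * Real.exp (2 * (f t - k) / m)
    with hg'def
  have hgD : ∀ t ∈ D, HasDerivWithinAt g (g' t) D t := by
    intro t ht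
    have h1 : HasDerivWithinAt (fun t => 2 * (f t - k) / m) (2 * f' t / m) D t :=
      (((hf t ht).sub_const k).const_mul 2).div_const m
    have h3 : HasDerivWithinAt (fun y => x y * Real.exp (2 * (f y - k) / m))
        (x' t * Real.exp (2 * (f t - k) / m) + x t * (Real.exp (2 * (f t - k) / m) * (2 * f' t / m)))
        D t := (hx t ht).mul h1.exp
    convert h3 using 1
    simp only [hg'def]
    ring
  have hkey : ∀ t ∈ D, g' t ≤ 1 - g t ^ 2 := by
    intro t ht
    have hfk' := hfk t ht
    have hs : 2 * (f t - k) / m ≤ 0 :=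
      div_nonpos_of_nonpos_of_nonneg (by linarith) hm0.le
    have hE0 : 0 < Real.exp (2 * (f t - k) / m) := Real.exp_pos _
    have hE1 : Real.exp (2 * (f t - k) / m) ≤ 1 := Real.exp_le_one_iff.2 hs
    have h1 : x' t + x t * (2 * f' t / m) ≤ 1 - x t ^ 2 := by
      have h2 := hineq t ht
      have heq : 2 / m * x t * f' t = x t * (2 * f' t / m) := by ring
      linarith [h2, heq]
    have h2 : g' t ≤ (1 - x t ^ 2) * Real.exp (2 * (f t - k) / m) := by
      simp only [hg'def]
      exact mul_le_mul_of_nonneg_right h1 hE0.le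
    have h3 : g t ^ 2 = x t ^ 2 * Real.exp (2 * (f t - k) / m) ^ 2 := by
      simp only [hgdef]; ring
    nlinarith [sq_nonneg (x t), hE0, hE1,
      mul_nonneg (mul_nonneg (sq_nonneg (x t)) hE0.le) (sub_nonneg.2 hE1)]
  have hg0 : g 0 ≤ -(1 + δ) := by
    have h1 : x 0 * Real.exp (2 * (f 0 - k) / m) ≤
        -(1 + δ) * Real.exp (2 * (k - f 0) / m) * Real.exp (2 * (f 0 - k) / m) :=
      mul_le_mul_of_nonneg_right hx0 (Real.exp_pos _).le
    calc g 0 = x 0 * Real.exp (2 * (f 0 - k) / m) := rfl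
      _ ≤ -(1 + δ) * Real.exp (2 * (k - f 0) / m) * Real.exp (2 * (f 0 - k) / m) := h1
      _ = -(1 + δ) := by
          rw [mul_assoc, ← Real.exp_add,
            show 2 * (k - f 0) / m + 2 * (f 0 - k) / m = 0 by ring, Real.exp_zero, mul_one]
  -- lower bound for u at 0
  have hu0 : c ≤ (g 0 + 1) / (g 0 - 1) * Real.exp (-2 * 0) := by
    have hne : g 0 - 1 < 0 := by linarith
    rw [show (-2 : ℝ) * 0 = 0 by ring, Real.exp_zero, mul_one, le_div_iff_of_neg hne, hc,
      div_mul_eq_mul_div, le_div_iff₀ hδ2]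
    nlinarith [hg0]
  -- step 1: g stays below 1
  have step1 : ∀ b ∈ D, ∀ t ∈ Icc 0 b, g t < 1 := by
    intro b hb
    by_contra hcon
    push_neg at hcon
    obtain ⟨t₀, ht₀, hgt₀⟩ := hcon
    have hbD := hIccD b hb
    have hgc : ContinuousOn g (Icc 0 b) := fun t ht =>
      ((hgD t (hbD ht)).continuousWithinAt).mono hbD
    have hAcl : IsClosed (Icc 0 b ∩ g ⁻¹' Ici 1) :=
      hgc.preimage_isClosed_of_isClosed isClosed_Icc isClosed_Ici
    have hAne : (Icc 0 b ∩ g ⁻¹' Ici 1).Nonempty := ⟨t₀, ht₀, hgt₀⟩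
    have hbdd : BddBelow (Icc 0 b ∩ g ⁻¹' Ici 1) := ⟨0, fun t ht => ht.1.1⟩
    set τ := sInf (Icc 0 b ∩ g ⁻¹' Ici 1) with hτ
    have hτA : τ ∈ Icc 0 b ∩ g ⁻¹' Ici 1 := hAcl.csInf_mem hAne hbdd
    have hτIcc : τ ∈ Icc 0 b := hτA.1
    have hgτ : 1 ≤ g τ := hτA.2
    have hτ0 : 0 < τ := by
      rcases lt_or_eq_of_le hτIcc.1 with h | h
      · exact h
      · exfalso; rw [← h] at hgτ; linarith
    have hlt1 : ∀ t, 0 ≤ t → t < τ → g t < 1 := by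
      intro t h0 hlt
      by_contra hge
      push_neg at hge
      have htA : t ∈ Icc 0 b ∩ g ⁻¹' Ici 1 := ⟨⟨h0, le_trans hlt.le hτIcc.2⟩, hge⟩
      exact absurd (csInf_le hbdd htA) (not_le.2 hlt)
    have hbound : ∀ t ∈ Ico 0 τ, g t ≤ -(1 + δ) := by
      intro t ht
      have htb : t ≤ b := le_trans ht.2.le hτIcc.2
      have hsub2 : Icc 0 t ⊆ D := fun s hs => hbD ⟨hs.1, le_trans hs.2 htb⟩
      have hmono := monoU_aux D g g' t
        (fun s hs => mem_nhds_iff.2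
          ⟨Ioo 0 t, fun r hr => hbD ⟨hr.1.le, le_trans hr.2.le htb⟩, isOpen_Ioo, hs⟩)
        (fun s hs => hgD s (hsub2 hs)) hsub2
        (fun s hs => hlt1 s hs.1 (lt_of_le_of_lt hs.2 ht.2))
        (fun s hs => hkey s (hsub2 hs))
      have h01 := hmono (left_mem_Icc.2 ht.1) (right_mem_Icc.2 ht.1) ht.1
      have hut : c ≤ (g t + 1) / (g t - 1) * Real.exp (-2 * t) := le_trans hu0 h01
      have hgt1 : g t < 1 := hlt1 t ht.1 ht.2
      have hineg : g t - 1 < 0 := by linarith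
      have hE1 : Real.exp (-2 * t) ≤ 1 := Real.exp_le_one_iff.2 (by nlinarith [ht.1])
      have hE0 : 0 < Real.exp (-2 * t) := Real.exp_pos _
      have hw0 : 0 < (g t + 1) / (g t - 1) := by nlinarith [hut, hc0, hE0, hE1]
      have hwc : c ≤ (g t + 1) / (g t - 1) := by
        nlinarith [hut, mul_nonneg hw0.le (sub_nonneg.2 hE1)]
      rw [le_div_iff_of_neg hineg, hc, div_mul_eq_mul_div, le_div_iff₀ hδ2] at hwc
      nlinarith [hwc]
    have hτcl : τ ∈ closure (Ico 0 τ) := by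
      rw [closure_Ico (ne_of_lt hτ0)]
      exact ⟨hτ0.le, le_refl τ⟩
    have hNB : (nhdsWithin τ (Ico 0 τ)).NeBot := mem_closure_iff_nhdsWithin_neBot.1 hτcl
    have htend : Tendsto g (nhdsWithin τ (Ico 0 τ)) (nhds (g τ)) :=
      (hgc τ hτIcc).mono (fun s hs => ⟨hs.1, le_trans hs.2.le hτIcc.2⟩)
    have hfin : g τ ≤ -(1 + δ) :=
      le_of_tendsto htend (eventually_nhdsWithin_of_forall hbound)
    linarith
  -- main estimate
  have main : ∀ t ∈ D, t < t₁ ∧ g t ≤ -coth (t₁ - t) := by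
    intro t ht
    have ht0 : 0 ≤ t := by rw [hD] at ht; exact ht.1
    have hsub2 : Icc 0 t ⊆ D := hIccD t ht
    have hlt1 := step1 t ht
    have hmono := monoU_aux D g g' t
      (fun s hs => mem_nhds_iff.2
        ⟨Ioo 0 t, fun r hr => hsub2 ⟨hr.1.le, hr.2.le⟩, isOpen_Ioo, hs⟩)
      (fun s hs => hgD s (hsub2 hs)) hsub2 hlt1 (fun s hs => hkey s (hsub2 hs))
    have h01 := hmono (left_mem_Icc.2 ht0) (right_mem_Icc.2 ht0) ht0
    have hut : c ≤ (g t + 1) / (g t - 1) * Real.exp (-2 * t) := le_trans hu0 h01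
    have hgt1 : g t < 1 := hlt1 t (right_mem_Icc.2 ht0)
    have hineg : g t - 1 < 0 := by linarith
    set W : ℝ := c * Real.exp (2 * t) with hW
    have hW0 : 0 < W := by positivity
    have hWe : W = Real.exp (2 * t - 2 * t₁) := by
      rw [hW, ← ht₁exp, ← Real.exp_add]
      congr 1
      ring
    have hwc : W ≤ (g t + 1) / (g t - 1) := by
      have h3 : Real.exp (-2 * t) * Real.exp (2 * t) = 1 := by
        rw [← Real.exp_add]; norm_num
      calc W = c * Real.exp (2 * t) := rfl
        _ ≤ (g t + 1) / (g t - 1) * Real.exp (-2 * t) * Real.exp (2 * t) :=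
            mul_le_mul_of_nonneg_right hut (Real.exp_pos _).le
        _ = (g t + 1) / (g t - 1) := by rw [mul_assoc, h3, mul_one]
    rw [le_div_iff_of_neg hineg] at hwc
    have hW1 : W < 1 := by
      by_contra h
      push_neg at h
      have := mul_le_mul_of_nonpos_right h hineg.le
      linarith
    have htlt : t < t₁ := by
      have h4 : Real.exp (2 * t - 2 * t₁) < Real.exp 0 := by
        rw [← hWe, Real.exp_zero]; exact hW1
      have := Real.exp_lt_exp.1 h4
      linarith
    refine ⟨htlt, ?_⟩
    have hs0 : 0 < t₁ - t := by linarith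
    have hsinh : 0 < Real.sinh (t₁ - t) := by
      rw [Real.sinh_pos_iff]; exact hs0
    have hWs : W = Real.exp (-(t₁ - t)) * Real.exp (-(t₁ - t)) := by
      rw [hWe, ← Real.exp_add]
      congr 1
      ring
    have hcoth : coth (t₁ - t) = (1 + W) / (1 - W) := by
      rw [coth, div_eq_div_iff (ne_of_gt hsinh) (by linarith : (1:ℝ) - W ≠ 0),
        Real.cosh_eq, Real.sinh_eq, hWs]
      have h5 : Real.exp (t₁ - t) * Real.exp (-(t₁ - t)) = 1 := by
        rw [← Real.exp_add]; norm_num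
      linear_combination (-Real.exp (-(t₁ - t))) * h5
    have hgle : g t ≤ -(1 + W) / (1 - W) := by
      rw [le_div_iff₀ (by linarith : (0:ℝ) < 1 - W)]
      linarith
    rw [hcoth, ← neg_div]
    exact hgle
  constructor
  · intro t ht
    obtain ⟨h1, h2⟩ := main t ht
    refine ⟨h1, ?_⟩
    have hE2 : (0:ℝ) < Real.exp (2 * (k - f t) / m) := Real.exp_pos _
    have hxg : g t * Real.exp (2 * (k - f t) / m) = x t := by
      simp only [hgdef]
      rw [mul_assoc, ← Real.exp_add,
        show 2 * (f t - k) / m + 2 * (k - f t) / m = 0 by ring, Real.exp_zero, mul_one]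
    calc x t = g t * Real.exp (2 * (k - f t) / m) := hxg.symm
      _ ≤ -coth (t₁ - t) * Real.exp (2 * (k - f t) / m) :=
          mul_le_mul_of_nonneg_right h2 hE2.le
      _ = -Real.exp (2 * (k - f t) / m) * coth (t₁ - t) := by ring
  · by_contra hcon
    push_neg at hcon
    have ht₁D : t₁ ∈ D := by
      rw [hD]
      exact ⟨ht₁pos.le, hcon⟩
    exact absurd (main t₁ ht₁D).1 (lt_irrefl t₁)
end

section
/- Let n ≥ 2 be an integer, T ∈ (0, ∞] and δ > 0. Let f, x : [0, T) → ℝ be differentiable functions such that f'(t) ≤ 0 for all t ∈ [0, T) (f is nonincreasing), x'(t) ≤ 1 - x(t)² - (2/(n-1))·x(t)·f'(t) for all t ∈ [0, T), and x(0) ≤ -(1+δ). Then for every t ∈ [0, T), t < arctanh(1/(1+δ)) and x(t) ≤ -coth(arctanh(1/(1+δ)) - t); in particular T ≤ arctanh(1/(1+δ)). -/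
lemma coth_anti {a b : ℝ} (ha : 0 < a) (hab : a ≤ b) : coth b ≤ coth a := by
  have hsa := Real.sinh_pos_iff.2 ha
  have hsb := Real.sinh_pos_iff.2 (lt_of_lt_of_le ha hab)
  rw [coth, coth, div_le_div_iff₀ hsb hsa]
  have h : 0 ≤ Real.sinh (b - a) := Real.sinh_nonneg_iff.2 (by linarith)
  rw [Real.sinh_sub] at h
  nlinarith

lemma coth_formula {u : ℝ} (hu : u < -1) :
    coth (Real.log ((u - 1) / (u + 1)) / 2) = -u := by
  have h1 : u + 1 < 0 := by linarith
  have h2 : u - 1 < 0 := by linarith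
  have hrpos : 0 < (u - 1) / (u + 1) := div_pos_iff.2 (Or.inr ⟨h2, h1⟩)
  have hr : 1 < (u - 1) / (u + 1) := by
    rw [lt_div_iff_of_neg h1]; linarith
  set L := Real.log ((u - 1) / (u + 1)) / 2 with hL
  have hEpos := Real.exp_pos L
  have hE2 : Real.exp L * Real.exp L = (u - 1) / (u + 1) := by
    rw [← Real.exp_add]
    have h3 : L + L = Real.log ((u - 1) / (u + 1)) := by rw [hL]; ring
    rw [h3, Real.exp_log hrpos]
  set E := Real.exp L with hE
  have hEne : E ≠ 0 := ne_of_gt hEpos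
  have hE1 : 1 < E * E := by rw [hE2]; exact hr
  have hd : E - E⁻¹ ≠ 0 := by
    have : 0 < E - E⁻¹ := by
      rw [sub_pos, inv_lt_iff_one_lt_mul₀ hEpos]; nlinarith
    exact ne_of_gt this
  have hd2 : E * E - 1 ≠ 0 := by nlinarith
  rw [coth, Real.cosh_eq, Real.sinh_eq, Real.exp_neg, ← hE]
  have step1 : (E + E⁻¹) / 2 / ((E - E⁻¹) / 2) = (E * E + 1) / (E * E - 1) := by
    field_simp
  rw [step1, hE2]
  have hrne : (u - 1) / (u + 1) - 1 ≠ 0 := by linarith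
  have h1ne : u + 1 ≠ 0 := ne_of_lt h1
  field_simp
  ring

/-- Corollary 2.3: when `f` is nonincreasing (`∇f` future causal), a solution of
`x' ≤ 1 - x² - (2/(n-1)) x f'` with `x(0) ≤ -(1+δ)` blows up to `-∞` at or before
`arctanh(1/(1+δ))`. -/
theorem stmt_6 (n : ℕ) (hn : 2 ≤ n) (T : EReal) (hT : 0 < T) (δ : ℝ) (hδ : 0 < δ)
    (f x f' x' : ℝ → ℝ)
    (D : Set ℝ) (hD : D = {t : ℝ | 0 ≤ t ∧ (t : EReal) < T})
    (hf : ∀ t ∈ D, HasDerivWithinAt f (f' t) D t)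
    (hx : ∀ t ∈ D, HasDerivWithinAt x (x' t) D t)
    (hf' : ∀ t ∈ D, f' t ≤ 0)
    (hineq : ∀ t ∈ D, x' t ≤ 1 - (x t) ^ 2 - (2 / ((n : ℝ) - 1)) * x t * f' t)
    (hx0 : x 0 ≤ -(1 + δ)) :
    (∀ t ∈ D, t < arctanh (1 / (1 + δ)) ∧
        x t ≤ -coth (arctanh (1 / (1 + δ)) - t)) ∧
      T ≤ (arctanh (1 / (1 + δ)) : EReal) := by
  have hn1 : (1:ℝ) ≤ (n : ℝ) - 1 := by
    have : (2:ℝ) ≤ (n : ℝ) := by exact_mod_cast hn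
    linarith
  set c : ℝ := 2 / ((n : ℝ) - 1) with hc
  have hcpos : 0 ≤ c := by
    apply div_nonneg (by norm_num) (by linarith)
  -- D contains [0, b] for any b ∈ D
  have hsub : ∀ b ∈ D, Set.Icc (0:ℝ) b ⊆ D := by
    intro b hb t ht
    rw [hD] at hb ⊢
    refine ⟨ht.1, lt_of_le_of_lt ?_ hb.2⟩
    exact_mod_cast ht.2
  -- right-derivative transfer
  have hright : ∀ b ∈ D, ∀ t ∈ Set.Ico (0:ℝ) b, D ∈ nhdsWithin t (Set.Ici t) := by
    intro b hb t ht
    refine Filter.mem_of_superset (Ico_mem_nhdsGE ht.2) ?_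
    intro s hs
    exact hsub b hb ⟨le_trans ht.1 hs.1, le_of_lt hs.2⟩
  have hcont : ∀ b ∈ D, ContinuousOn x (Set.Icc 0 b) := by
    intro b hb t ht
    exact ((hx t (hsub b hb ht)).continuousWithinAt).mono (hsub b hb)
  have hxIci : ∀ b ∈ D, ∀ t ∈ Set.Ico (0:ℝ) b,
      HasDerivWithinAt x (x' t) (Set.Ici t) t := by
    intro b hb t ht
    exact (hx t (hsub b hb ⟨ht.1, ht.2.le⟩)).mono_of_mem_nhdsWithin (hright b hb t ht)
  -- Invariance: x stays ≤ -(1+δ)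
  have hDx : ∀ t ∈ D, x t ≤ -(1 + δ) := by
    intro b hb
    have key : ∀ ⦃s : ℝ⦄, s ∈ Set.Icc (0:ℝ) b → x s ≤ -(1 + δ) := by
      apply image_le_of_deriv_right_lt_deriv_boundary' (f := x) (f' := x')
        (B := fun _ => -(1 + δ)) (B' := fun _ => 0) (hcont b hb) (hxIci b hb) hx0
        continuousOn_const (fun t _ => hasDerivWithinAt_const t _ _)
      intro t ht heq
      have htD : t ∈ D := hsub b hb ⟨ht.1, ht.2.le⟩
      have h1 := hineq t htD
      have h2 := hf' t htD
      rw [heq] at h1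
      have h3 : c * -(1 + δ) * f' t = (c * (1 + δ)) * (-f' t) := by ring
      have h4 : 0 ≤ (c * (1 + δ)) * (-f' t) :=
        mul_nonneg (mul_nonneg hcpos (by linarith)) (by linarith)
      nlinarith
    have hbmem : b ∈ D := hb
    rw [hD] at hbmem
    exact key ⟨hbmem.1, le_refl b⟩
  -- the transformed function
  set g : ℝ → ℝ := fun t => (Real.log (x t - 1) - Real.log (x t + 1)) / 2 + t with hg
  set g' : ℝ → ℝ := fun t => ((x t - 1)⁻¹ * x' t - (x t + 1)⁻¹ * x' t) / 2 + 1 with hg'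
  have hxneg : ∀ t ∈ D, x t + 1 < 0 ∧ x t - 1 < 0 := by
    intro t ht
    have := hDx t ht
    constructor <;> linarith
  have hgderiv : ∀ t ∈ D, HasDerivWithinAt g (g' t) D t := by
    intro t ht
    have h1 : x t - 1 ≠ 0 := ne_of_lt (hxneg t ht).2
    have h2 : x t + 1 ≠ 0 := ne_of_lt (hxneg t ht).1
    have hl1 : HasDerivWithinAt (fun s => Real.log (x s - 1)) ((x t - 1)⁻¹ * x' t) D t :=
      (Real.hasDerivAt_log h1).comp_hasDerivWithinAt (h := fun s => x s - 1) t ((hx t ht).sub_const 1)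
    have hl2 : HasDerivWithinAt (fun s => Real.log (x s + 1)) ((x t + 1)⁻¹ * x' t) D t :=
      (Real.hasDerivAt_log h2).comp_hasDerivWithinAt (h := fun s => x s + 1) t ((hx t ht).add_const 1)
    exact ((hl1.sub hl2).div_const 2).add (hasDerivWithinAt_id t D)
  have hgIci : ∀ b ∈ D, ∀ t ∈ Set.Ico (0:ℝ) b,
      HasDerivWithinAt g (g' t) (Set.Ici t) t := by
    intro b hb t ht
    exact (hgderiv t (hsub b hb ⟨ht.1, ht.2.le⟩)).mono_of_mem_nhdsWithin (hright b hb t ht)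
  have hgcont : ∀ b ∈ D, ContinuousOn g (Set.Icc 0 b) := by
    intro b hb t ht
    exact ((hgderiv t (hsub b hb ht)).continuousWithinAt).mono (hsub b hb)
  -- g' ≤ 0
  have hg'le : ∀ t ∈ D, g' t ≤ 0 := by
    intro t ht
    have hu : x t ≤ -(1 + δ) := hDx t ht
    have hu2 : 0 < (x t) ^ 2 - 1 := by nlinarith
    have hXle : x' t ≤ 1 - (x t) ^ 2 := by
      have h1 := hineq t ht
      have h2 := hf' t ht
      have h4 := mul_nonneg (mul_nonneg hcpos (by linarith : (0:ℝ) ≤ -x t))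
        (by linarith : (0:ℝ) ≤ -f' t)
      have h5 : c * x t * f' t = c * -x t * -f' t := by ring
      linarith
    have h1 : x t - 1 ≠ 0 := by nlinarith
    have h2 : x t + 1 ≠ 0 := by nlinarith
    have hfac : (x t - 1)⁻¹ * x' t - (x t + 1)⁻¹ * x' t = x' t * (2 / ((x t) ^ 2 - 1)) := by
      field_simp
      ring
    have hmul : x' t * (2 / ((x t) ^ 2 - 1)) ≤ (1 - (x t) ^ 2) * (2 / ((x t) ^ 2 - 1)) :=
      mul_le_mul_of_nonneg_right hXle (by positivity)
    have heq2 : (1 - (x t) ^ 2) * (2 / ((x t) ^ 2 - 1)) = -2 := by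
      field_simp
      ring
    show ((x t - 1)⁻¹ * x' t - (x t + 1)⁻¹ * x' t) / 2 + 1 ≤ 0
    rw [hfac]
    linarith [hmul, heq2 ▸ hmul]
  -- comparison: g b ≤ g 0
  have hgmono : ∀ b ∈ D, g b ≤ g 0 := by
    intro b hb
    have hbmem : b ∈ D := hb
    rw [hD] at hbmem
    have key : ∀ ⦃s : ℝ⦄, s ∈ Set.Icc (0:ℝ) b → g s ≤ g 0 := by
      apply image_le_of_deriv_right_le_deriv_boundary (f := g) (f' := g')
        (B := fun _ => g 0) (B' := fun _ => 0) (hgcont b hb) (hgIci b hb) (le_refl _)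
        continuousOn_const (fun t _ => hasDerivWithinAt_const t _ _)
      intro t ht
      exact hg'le t (hsub b hb ⟨ht.1, ht.2.le⟩)
    exact key ⟨hbmem.1, le_refl b⟩
  -- arctanh value
  have hδ1 : (0:ℝ) < 1 + δ := by linarith
  have harctanh : arctanh (1 / (1 + δ)) = Real.log ((2 + δ) / δ) / 2 := by
    rw [arctanh]
    congr 2
    field_simp
    field_simp [hδ.ne']
    ring
  set t₀ : ℝ := arctanh (1 / (1 + δ)) with ht₀
  have ht₀pos : 0 < t₀ := by
    rw [harctanh]
    have : 1 < (2 + δ) / δ := (one_lt_div hδ).2 (by linarith)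
    have := Real.log_pos this
    linarith
  -- g 0 ≤ t₀
  have hg0 : g 0 ≤ t₀ := by
    have hv : x 0 ≤ -(1 + δ) := hx0
    have hv1 : x 0 + 1 < 0 := by linarith
    have hv2 : x 0 - 1 < 0 := by linarith
    have hlogd : Real.log (x 0 - 1) - Real.log (x 0 + 1)
        = Real.log ((x 0 - 1) / (x 0 + 1)) :=
      (Real.log_div (ne_of_lt hv2) (ne_of_lt hv1)).symm
    have hratio : (x 0 - 1) / (x 0 + 1) ≤ (2 + δ) / δ := by
      have hrw : (x 0 - 1) / (x 0 + 1) = (1 - x 0) / (-(x 0 + 1)) := by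
        rw [← neg_div_neg_eq]; congr 1 <;> ring
      rw [hrw, div_le_div_iff₀ (by linarith) hδ]
      nlinarith
    have hrpos : 0 < (x 0 - 1) / (x 0 + 1) := div_pos_iff.2 (Or.inr ⟨hv2, hv1⟩)
    have hloglog : Real.log ((x 0 - 1) / (x 0 + 1)) ≤ Real.log ((2 + δ) / δ) :=
      Real.log_le_log hrpos hratio
    rw [hg]
    simp only [add_zero]
    rw [hlogd, harctanh]
    linarith
  -- main pointwise claim
  have main : ∀ t ∈ D, t < t₀ ∧ x t ≤ -coth (t₀ - t) := by
    intro t ht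
    have hu : x t ≤ -(1 + δ) := hDx t ht
    have hu1 : x t < -1 := by linarith
    have h1 : x t + 1 < 0 := by linarith
    have h2 : x t - 1 < 0 := by linarith
    have hlogd : Real.log (x t - 1) - Real.log (x t + 1)
        = Real.log ((x t - 1) / (x t + 1)) :=
      (Real.log_div (ne_of_lt h2) (ne_of_lt h1)).symm
    set L : ℝ := Real.log ((x t - 1) / (x t + 1)) / 2 with hL
    have hr : 1 < (x t - 1) / (x t + 1) := by
      rw [lt_div_iff_of_neg h1]; linarith
    have hLpos : 0 < L := by
      have := Real.log_pos hr
      rw [hL]; linarith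
    have hgt : L + t ≤ t₀ := by
      have := hgmono t ht
      rw [hg] at this
      simp only at this
      rw [hlogd] at this
      have := le_trans this hg0
      rw [hL]; linarith [this]
    have htlt : t < t₀ := by linarith
    refine ⟨htlt, ?_⟩
    have hcothL : coth L = -(x t) := coth_formula hu1
    have hcoth_le : coth (t₀ - t) ≤ coth L := coth_anti hLpos (by linarith)
    rw [hcothL] at hcoth_le
    linarith
  refine ⟨main, ?_⟩
  by_contra h
  push_neg at h
  have ht₀D : t₀ ∈ D := by
    rw [hD]; exact ⟨le_of_lt ht₀pos, h⟩
  exact absurd (main t₀ ht₀D).1 (lt_irrefl t₀)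
end

section
/- Let T ∈ (0, ∞] and δ > 0, and let y : [0, T) → ℝ be differentiable with y(0) ≤ -(1+δ) and y'(t) ≤ 1 - y(t)² for all t ∈ [0, T). Then for every t ∈ [0, T), t < arctanh(1/(1+δ)) and y(t) ≤ -coth(arctanh(1/(1+δ)) - t); in particular T ≤ arctanh(1/(1+δ)). -/
open Set

/-- Riccati comparison estimate (2.18)–(2.21) from the proof of Lemma 2.2:
a solution of `y' ≤ 1 - y²` with `y(0) ≤ -(1+δ)` blows up at or before
`arctanh(1/(1+δ))`. -/
theorem stmt_8 (T : EReal) (hT : 0 < T) (δ : ℝ) (hδ : 0 < δ)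
    (y y' : ℝ → ℝ)
    (D : Set ℝ) (hD : D = {t : ℝ | 0 ≤ t ∧ (t : EReal) < T})
    (hy : ∀ t ∈ D, HasDerivWithinAt y (y' t) D t)
    (hy0 : y 0 ≤ -(1 + δ))
    (hineq : ∀ t ∈ D, y' t ≤ 1 - (y t) ^ 2) :
    (∀ t ∈ D, t < arctanh (1 / (1 + δ)) ∧
        y t ≤ -coth (arctanh (1 / (1 + δ)) - t)) ∧
      T ≤ (arctanh (1 / (1 + δ)) : EReal) := by
  have hδ1 : (0:ℝ) < 1 + δ := by linarith
  set t₀ : ℝ := arctanh (1 / (1 + δ)) with ht₀def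
  -- compute t₀
  have ht₀ : t₀ = Real.log ((2 + δ) / δ) / 2 := by
    have hlt : (0:ℝ) < 1 - 1 / (1 + δ) := by
      have : 1 / (1 + δ) < 1 := by rw [div_lt_one hδ1]; linarith
      linarith
    have harg : (1 + 1/(1+δ)) / (1 - 1/(1+δ)) = (2+δ)/δ := by
      rw [div_eq_div_iff hlt.ne' hδ.ne']
      field_simp
      ring
    rw [ht₀def, arctanh, harg]
  have ht₀pos : 0 < t₀ := by
    rw [ht₀]
    have h1 : (1:ℝ) < (2 + δ) / δ := by
      rw [lt_div_iff₀ hδ]; linarith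
    exact div_pos (Real.log_pos h1) two_pos
  -- 0 ∈ D
  have h0D : (0:ℝ) ∈ D := by rw [hD]; exact ⟨le_refl _, by exact_mod_cast hT⟩
  -- Icc 0 b ⊆ D for b ∈ D
  have hIcc : ∀ b ∈ D, Icc (0:ℝ) b ⊆ D := by
    intro b hb t ht
    rw [hD] at hb ⊢
    refine ⟨ht.1, lt_of_le_of_lt ?_ hb.2⟩
    exact_mod_cast ht.2
  -- D is a right-neighborhood of each of its points
  have hmem : ∀ t ∈ D, D ∈ nhdsWithin t (Ici t) := by
    intro t ht
    rw [hD] at ht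
    obtain ⟨z, hz1, hz2⟩ := exists_between ht.2
    have hzt : z ≠ ⊤ := fun h => absurd (h ▸ hz2) (by simp)
    have hzb : z ≠ ⊥ := fun h => absurd (h ▸ hz1) (by simp)
    have hztR : (z.toReal : EReal) = z := EReal.coe_toReal hzt hzb
    have htz : t < z.toReal := by
      rw [← EReal.coe_lt_coe_iff, hztR]; exact hz1
    refine Filter.mem_of_superset
      (Filter.inter_mem self_mem_nhdsWithin
        (mem_nhdsWithin_of_mem_nhds (Iio_mem_nhds htz))) ?_
    rintro s ⟨hs1, hs2⟩
    rw [hD]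
    refine ⟨le_trans ht.1 hs1, lt_trans ?_ hz2⟩
    rw [← hztR, EReal.coe_lt_coe_iff]
    exact hs2
  -- right derivatives
  have hyIci : ∀ t ∈ D, HasDerivWithinAt y (y' t) (Ici t) t := by
    intro t ht
    exact (hy t ht).mono_of_mem_nhdsWithin (hmem t ht)
  have hycont : ContinuousOn y D := fun t ht => (hy t ht).continuousWithinAt
  -- Step 1 : invariance, y t ≤ -(1+δ) on D
  have hinv : ∀ t ∈ D, y t ≤ -(1 + δ) := by
    intro b hb
    have h0b : (0:ℝ) ≤ b := by rw [hD] at hb; exact hb.1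
    have := image_le_of_deriv_right_lt_deriv_boundary'
      (f := y) (f' := y') (a := 0) (b := b)
      (hycont.mono (hIcc b hb))
      (fun x hx => hyIci x (hIcc b hb ⟨hx.1, hx.2.le⟩))
      (B := fun _ => -(1 + δ)) (B' := fun _ => 0)
      hy0 continuousOn_const
      (fun x _ => hasDerivWithinAt_const x _ _)
      (fun x hx hfx => by
        have h := hineq x (hIcc b hb ⟨hx.1, hx.2.le⟩)
        have hfx' : y x = -(1 + δ) := hfx
        rw [hfx'] at h
        show y' x < 0
        nlinarith)
    exact this (right_mem_Icc.2 h0b)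
  -- the function g
  set g : ℝ → ℝ := fun s => (Real.log (y s + 1) - Real.log (y s - 1)) / 2 with hgdef
  set g' : ℝ → ℝ := fun s => ((y s + 1)⁻¹ * y' s - (y s - 1)⁻¹ * y' s) / 2 with hg'def
  have hyneg : ∀ t ∈ D, y t + 1 < 0 ∧ y t - 1 < 0 := by
    intro t ht
    have := hinv t ht
    constructor <;> linarith
  have hgD : ∀ t ∈ D, HasDerivWithinAt g (g' t) D t := by
    intro t ht
    obtain ⟨h1, h2⟩ := hyneg t ht
    exact (((Real.hasDerivAt_log h1.ne).comp_hasDerivWithinAt t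
        ((hy t ht).add_const 1)).sub
      ((Real.hasDerivAt_log h2.ne).comp_hasDerivWithinAt t
        ((hy t ht).sub_const 1))).div_const 2
  have hgIci : ∀ t ∈ D, HasDerivWithinAt g (g' t) (Ici t) t := fun t ht =>
    (hgD t ht).mono_of_mem_nhdsWithin (hmem t ht)
  have hgcont : ContinuousOn g D := fun t ht => (hgD t ht).continuousWithinAt
  -- g' ≥ 1 on D
  have hg'ge : ∀ t ∈ D, 1 ≤ g' t := by
    intro t ht
    obtain ⟨h1, h2⟩ := hyneg t ht
    have hy2 : 1 - (y t) ^ 2 < 0 := by nlinarith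
    have e1 : y t + 1 ≠ 0 := h1.ne
    have e2 : y t - 1 ≠ 0 := h2.ne
    have e3 : 1 - (y t) ^ 2 ≠ 0 := hy2.ne
    have hkey : g' t = y' t / (1 - (y t) ^ 2) := by
      show ((y t + 1)⁻¹ * y' t - (y t - 1)⁻¹ * y' t) / 2 = y' t / (1 - (y t) ^ 2)
      field_simp
      ring
    rw [hkey, le_div_iff_of_neg hy2, one_mul]
    exact hineq t ht
  -- Step 2 : g t ≥ g 0 + t on D
  have hcomp : ∀ t ∈ D, g 0 + t ≤ g t := by
    intro b hb
    have h0b : (0:ℝ) ≤ b := by rw [hD] at hb; exact hb.1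
    have := image_le_of_deriv_right_le_deriv_boundary
      (f := fun s => -g s) (f' := fun s => -g' s) (a := 0) (b := b)
      ((hgcont.mono (hIcc b hb)).neg)
      (fun x hx => (hgIci x (hIcc b hb ⟨hx.1, hx.2.le⟩)).neg)
      (B := fun s => -g 0 - s) (B' := fun _ => -1)
      (by simp)
      (continuousOn_const.sub continuousOn_id)
      (fun x _ => by
        simpa using (hasDerivWithinAt_id x (Ici x)).const_sub (-g 0))
      (fun x hx => by
        have h := hg'ge x (hIcc b hb ⟨hx.1, hx.2.le⟩)
        show -g' x ≤ -1
        linarith)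
    have hb2 : -g b ≤ -g 0 - b := this (right_mem_Icc.2 h0b)
    linarith
  -- g 0 ≥ -t₀
  have hg0 : -t₀ ≤ g 0 := by
    have hu : 1 + δ ≤ -(y 0) := by linarith
    have h1 : Real.log (y 0 + 1) = Real.log (-(y 0) - 1) := by
      rw [← Real.log_neg_eq_log]; ring_nf
    have h2 : Real.log (y 0 - 1) = Real.log (-(y 0) + 1) := by
      rw [← Real.log_neg_eq_log]; ring_nf
    have hmt₀ : -t₀ = (Real.log δ - Real.log (2 + δ)) / 2 := by
      rw [ht₀, Real.log_div (by linarith : (0:ℝ) < 2 + δ).ne' hδ.ne']; ring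
    show -t₀ ≤ (Real.log (y 0 + 1) - Real.log (y 0 - 1)) / 2
    rw [h1, h2, hmt₀]
    have hlog1 : Real.log δ - Real.log (2 + δ) ≤
        Real.log (-(y 0) - 1) - Real.log (-(y 0) + 1) := by
      rw [← Real.log_div hδ.ne' (by linarith : (0:ℝ) < 2 + δ).ne',
        ← Real.log_div (show (0:ℝ) < -(y 0) - 1 by linarith).ne' (show (0:ℝ) < -(y 0) + 1 by linarith).ne']
      apply (Real.log_le_log_iff (div_pos hδ (by linarith)) (div_pos (by linarith) (by linarith))).2
      rw [div_le_div_iff₀ (by positivity) (by linarith)]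
      nlinarith
    linarith
  -- g t < 0 on D
  have hgneg : ∀ t ∈ D, g t < 0 := by
    intro t ht
    have hc := hinv t ht
    have h1 : Real.log (y t + 1) = Real.log (-(y t) - 1) := by
      rw [← Real.log_neg_eq_log]; ring_nf
    have h2 : Real.log (y t - 1) = Real.log (-(y t) + 1) := by
      rw [← Real.log_neg_eq_log]; ring_nf
    show (Real.log (y t + 1) - Real.log (y t - 1)) / 2 < 0
    rw [h1, h2]
    have h3 : Real.log (-(y t) - 1) < Real.log (-(y t) + 1) :=
      Real.log_lt_log (by linarith) (by linarith)
    linarith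
  -- main pointwise conclusion
  have hmain : ∀ t ∈ D, t < t₀ ∧ y t ≤ -coth (t₀ - t) := by
    intro t ht
    have hgt := hcomp t ht
    have hglt := hgneg t ht
    have h0t : 0 ≤ t := by rw [hD] at ht; exact ht.1
    have htlt : t < t₀ := by linarith [hg0]
    refine ⟨htlt, ?_⟩
    set s := t₀ - t with hsdef
    have hs : 0 < s := by rw [hsdef]; linarith
    set a := y t with hadef
    have ha : a ≤ -(1 + δ) := hinv t ht
    have hp : a + 1 < 0 := by linarith
    have hq : a - 1 < 0 := by linarith
    -- get log (a+1)/(a-1) ≥ -2s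
    have hglb : -s ≤ g t := by rw [hsdef]; linarith [hg0]
    have hgt' : g t = (Real.log (a + 1) - Real.log (a - 1)) / 2 := rfl
    have hlogr : -(2*s) ≤ Real.log ((a + 1) / (a - 1)) := by
      rw [Real.log_div hp.ne hq.ne]
      linarith [hglb, hgt' ▸ hglb]
    have hrpos : 0 < (a + 1) / (a - 1) := div_pos_of_neg_of_neg hp hq
    have hre : Real.exp (-(2*s)) ≤ (a + 1) / (a - 1) := by
      calc Real.exp (-(2*s)) ≤ Real.exp (Real.log ((a+1)/(a-1))) :=
            Real.exp_le_exp.2 hlogr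
        _ = (a + 1) / (a - 1) := Real.exp_log hrpos
    set e := Real.exp (-(2*s)) with hedef
    have he0 : 0 < e := Real.exp_pos _
    have he1 : e < 1 := by
      rw [hedef, Real.exp_lt_one_iff]; linarith
    have hem : e - 1 < 0 := by linarith
    -- a ≤ (e+1)/(e-1)
    have hea : a + 1 ≤ e * (a - 1) := (le_div_iff_of_neg hq).1 hre
    have hae : a ≤ (e + 1) / (e - 1) := by
      rw [le_div_iff_of_neg hem]
      nlinarith
    -- -coth s = (e+1)/(e-1)
    have hprod : Real.exp (-s) * Real.exp s = 1 := by
      rw [← Real.exp_add]; simp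
    have hee2 : Real.exp (-s) * Real.exp (-s) = e := by
      rw [hedef, ← Real.exp_add]; congr 1; ring
    have hsinhpos : 0 < Real.sinh s := by
      rw [Real.sinh_eq]
      have hlt2 : Real.exp (-s) < Real.exp s := Real.exp_lt_exp.2 (by linarith)
      linarith
    have hkey2 : -Real.cosh s * (e - 1) = (e + 1) * Real.sinh s := by
      rw [Real.cosh_eq, Real.sinh_eq]
      linear_combination (Real.exp s) * hee2 - (Real.exp (-s)) * hprod
    have hcoth : -coth s = (e + 1) / (e - 1) := by
      rw [coth, ← neg_div, div_eq_div_iff hsinhpos.ne' hem.ne]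
      linear_combination hkey2
    exact le_trans hae (le_of_eq hcoth.symm)
  constructor
  · exact hmain
  · by_contra hc
    push_neg at hc
    have ht₀D : t₀ ∈ D := by
      rw [hD]
      exact ⟨ht₀pos.le, hc⟩
    exact absurd (hmain t₀ ht₀D).1 (lt_irrefl t₀)
end

section
/- Let n ≥ 2 be an integer, T ∈ (0, ∞], and let f, x : [0, T) → ℝ be differentiable with f'(t) ≤ 0 for all t ∈ [0, T) (f nonincreasing), x(0) ≤ -1, and x'(t) ≤ 1 - x(t)² - (2/(n-1))·x(t)·f'(t) for all t ∈ [0, T). Then x(t) ≤ -1 for all t ∈ [0, T). -/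
/-- Analytic claim underlying the first step of the proof of Theorem 1.5:
a solution of `x' ≤ 1 - x² - (2/(n-1)) x f'` with `f` nonincreasing and
`x(0) ≤ -1` satisfies `x(t) ≤ -1` on `[0,T)`. -/
theorem stmt_11 (n : ℕ) (hn : 2 ≤ n) (T : EReal) (hT : 0 < T)
    (f x f' x' : ℝ → ℝ)
    (D : Set ℝ) (hD : D = {t : ℝ | 0 ≤ t ∧ (t : EReal) < T})
    (hf : ∀ t ∈ D, HasDerivWithinAt f (f' t) D t)
    (hx : ∀ t ∈ D, HasDerivWithinAt x (x' t) D t)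
    (hf' : ∀ t ∈ D, f' t ≤ 0)
    (hx0 : x 0 ≤ -1)
    (hineq : ∀ t ∈ D, x' t ≤ 1 - (x t) ^ 2 - (2 / ((n : ℝ) - 1)) * x t * f' t) :
    ∀ t ∈ D, x t ≤ -1 := by
  intro t0 ht0
  by_contra hcon
  push_neg at hcon
  set c : ℝ := 2 / ((n : ℝ) - 1) with hc_def
  have hn2 : (2:ℝ) ≤ (n:ℝ) := by exact_mod_cast hn
  have hc : 0 ≤ c := by
    apply div_nonneg <;> linarith
  have ht0D : 0 ≤ t0 ∧ (t0 : EReal) < T := by rwa [hD] at ht0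
  have hIccD : Set.Icc 0 t0 ⊆ D := by
    rw [hD]
    intro t ht
    exact ⟨ht.1, lt_of_le_of_lt (EReal.coe_le_coe_iff.mpr ht.2) ht0D.2⟩
  have hxc : ContinuousOn x (Set.Icc 0 t0) := fun t ht =>
    ((hx t (hIccD ht)).continuousWithinAt).mono hIccD
  have hfc : ContinuousOn f (Set.Icc 0 t0) := fun t ht =>
    ((hf t (hIccD ht)).continuousWithinAt).mono hIccD
  obtain ⟨M, hM⟩ := isCompact_Icc.exists_bound_of_continuousOn
    (continuousOn_const.sub hxc)
  have hM1 : ∀ t ∈ Set.Icc (0:ℝ) t0, 1 - x t ≤ M := fun t ht =>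
    le_trans (le_abs_self _) (hM t ht)
  set S : Set ℝ := Set.Icc 0 t0 ∩ x ⁻¹' Set.Iic (-1) with hSdef
  have hS_closed : IsClosed S :=
    hxc.preimage_isClosed_of_isClosed isClosed_Icc isClosed_Iic
  have h0S : (0:ℝ) ∈ S := ⟨⟨le_refl 0, ht0D.1⟩, hx0⟩
  have hSbdd : BddAbove S := BddAbove.mono (Set.inter_subset_left) bddAbove_Icc
  set s := sSup S with hs_def
  have hsS : s ∈ S := hS_closed.csSup_mem ⟨0, h0S⟩ hSbdd
  have hs0 : 0 ≤ s := hsS.1.1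
  have hst0 : s < t0 := by
    rcases lt_or_eq_of_le hsS.1.2 with h | h
    · exact h
    · exfalso; have := hsS.2; rw [h] at this; exact absurd this (not_le.mpr hcon)
  have hpos : ∀ t, s < t → t ≤ t0 → -1 < x t := by
    intro t hst htt0
    by_contra h
    push_neg at h
    have htS : t ∈ S := ⟨⟨le_trans hs0 hst.le, htt0⟩, h⟩
    exact absurd (le_csSup hSbdd htS) (not_le.mpr hst)
  set H : ℝ → ℝ := fun t => (x t + 1) * Real.exp (c * f t - M * t) with hHdef
  have key : ∀ t ∈ Set.Ioo s t0,
      HasDerivAt H ((x' t + (x t + 1) * (c * f' t - M)) * Real.exp (c * f t - M * t)) t := by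
    intro t ht
    have htIcc : t ∈ Set.Icc (0:ℝ) t0 := ⟨le_trans hs0 ht.1.le, ht.2.le⟩
    have htD : t ∈ D := hIccD htIcc
    have hnhds : D ∈ nhds t := by
      apply Filter.mem_of_superset (Ioo_mem_nhds (lt_of_le_of_lt hs0 ht.1) ht.2)
      intro u hu
      exact hIccD ⟨hu.1.le, hu.2.le⟩
    have hxt : HasDerivAt x (x' t) t := (hx t htD).hasDerivAt hnhds
    have hft : HasDerivAt f (f' t) t := (hf t htD).hasDerivAt hnhds
    have h1 : HasDerivAt (fun u => x u + 1) (x' t) t := hxt.add_const 1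
    have h2 : HasDerivAt (fun u => c * f u - M * u) (c * f' t - M) t := by
      have := (hft.const_mul c).sub ((hasDerivAt_id t).const_mul M)
      simp only [id, mul_one] at this
      exact this
    have h3 := h2.exp
    have : HasDerivAt (fun u => (x u + 1) * Real.exp (c * f u - M * u))
        (x' t * Real.exp (c * f t - M * t) + (x t + 1) * (Real.exp (c * f t - M * t) * (c * f' t - M))) t :=
      h1.mul h3
    convert this using 1
    ring
  have hHanti : AntitoneOn H (Set.Icc s t0) := by
    apply antitoneOn_of_deriv_nonpos (convex_Icc s t0)
    · apply ContinuousOn.mul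
      · exact ((hxc.mono (Set.Icc_subset_Icc_left hs0)).add continuousOn_const)
      · exact Real.continuous_exp.comp_continuousOn
          (((hfc.mono (Set.Icc_subset_Icc_left hs0)).const_smul c).sub
            (continuousOn_const.mul continuousOn_id))
    · intro t ht
      rw [interior_Icc] at ht
      exact (key t ht).differentiableAt.differentiableWithinAt
    · intro t ht
      rw [interior_Icc] at ht
      rw [(key t ht).deriv]
      have htIcc : t ∈ Set.Icc (0:ℝ) t0 := ⟨le_trans hs0 ht.1.le, ht.2.le⟩
      have htD : t ∈ D := hIccD htIcc
      have hx1 : 0 < x t + 1 := by linarith [hpos t ht.1 ht.2.le]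
      have hMt : 1 - x t ≤ M := hM1 t htIcc
      have hcf : c * f' t ≤ 0 := mul_nonpos_of_nonneg_of_nonpos hc (hf' t htD)
      have hq := hineq t htD
      apply mul_nonpos_of_nonpos_of_nonneg _ (Real.exp_pos _).le
      nlinarith [mul_nonpos_of_nonpos_of_nonneg (by linarith : 1 - x t - M ≤ 0) hx1.le]
  have hle : H t0 ≤ H s := hHanti ⟨le_refl s, hst0.le⟩ ⟨hst0.le, le_refl t0⟩ hst0.le
  have hHs : H s ≤ 0 :=
    mul_nonpos_of_nonpos_of_nonneg (by have : x s ≤ -1 := hsS.2; linarith) (Real.exp_pos _).le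
  have hHt0 : 0 < H t0 := mul_pos (by linarith) (Real.exp_pos _)
  linarith
end
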